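/- Let r and r′ be database instances over the same schema and finite domain D, and IC a set of binary integrity constraints. Assume r′ ⊨ IC and the symmetric difference Δ(r,r′) is a minimal element under set inclusion of the set {Δ(r,r*) | r* ⊨ IC}. Then for every answer set S of the change program Π_Δ(r) with S ⊆ S(r,r′), it holds that r′ = I(S). -/

import Mathlib

namespace CQA

/-! ## Ground disjunctive extended logic programs and answer sets -/

/-- Ground literals over atoms of type `α`: atoms and classically negated atoms. -/
inductive Lit (α : Type) : Type
  | pos : α → Lit α
  | neg : α → Lit α

/-- Complement of a ground literal. -/
def Lit.compl {α : Type} : Lit α → Lit α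
  | .pos a => .neg a
  | .neg a => .pos a

/-- A ground disjunctive rule `⋁ head ← body, not nbody`
(`nbody` collects the literals occurring under weak negation `not`). -/
structure Rule (α : Type) where
  head : Set (Lit α)
  body : Set (Lit α)
  nbody : Set (Lit α)

/-- A ground disjunctive extended logic program: a set of ground rules. -/
abbrev Program (α : Type) := Set (Rule α)

/-- A fact. -/
def fact {α : Type} (L : Lit α) : Rule α := ⟨{L}, ∅, ∅⟩

/-- `S` contains no complementary pair of literals. -/
def Coherent {α : Type} (S : Set (Lit α)) : Prop :=
  ∀ a : α, ¬ (Lit.pos a ∈ S ∧ Lit.neg a ∈ S)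

/-- `S` satisfies every rule of `P`, reading `not L` as `L ∉ S`:
whenever all body literals are in `S` and no weakly negated literal is in `S`,
some head disjunct is in `S`. -/
def SatProg {α : Type} (S : Set (Lit α)) (P : Program α) : Prop :=
  ∀ R ∈ P, R.body ⊆ S → (∀ L ∈ R.nbody, L ∉ S) → ∃ L ∈ R.head, L ∈ S

/-- A model of a ground program: a set of ground literals without complementary
pairs satisfying every rule, with `not L` read as `L ∉ S`. -/
def IsModel {α : Type} (S : Set (Lit α)) (P : Program α) : Prop :=
  Coherent S ∧ SatProg S P

/-- The Gelfond–Lifschitz reduct of `P` with respect to `S`: delete every rule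
whose body contains `not L` with `L ∈ S`, then delete all remaining `not L`
conditions. -/
def reduct {α : Type} (P : Program α) (S : Set (Lit α)) : Program α :=
  {R' | ∃ R ∈ P, (∀ L ∈ R.nbody, L ∉ S) ∧ R' = Rule.mk R.head R.body ∅}

/-- `S` is an answer set of `P`: `S` has no complementary pair and is a minimal
model of the reduct `^S P`. -/
def AnswerSet {α : Type} (S : Set (Lit α)) (P : Program α) : Prop :=
  Coherent S ∧ SatProg S (reduct P S) ∧
    ∀ S' : Set (Lit α), S' ⊆ S → SatProg S' (reduct P S) → S' = S

/-- The intersection of all answer sets of `P`. -/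
def Core {α : Type} (P : Program α) : Set (Lit α) :=
  {L | ∀ S : Set (Lit α), AnswerSet S P → L ∈ S}

/-! ## Well-founded semantics for ground extended disjunctive programs -/

/-- The body of rule `R` is true in the partial interpretation `I`:
the body literals belong to `I` and every weakly negated literal is false
(its complement belongs to `I`). -/
def bodyTrue {α : Type} (I : Set (Lit α)) (R : Rule α) : Prop :=
  R.body ⊆ I ∧ ∀ L ∈ R.nbody, L.compl ∈ I

/-- Immediate-consequence operator `T_Π(I)`: all literals occurring in the head
of a rule whose body is true in `I` and whose remaining head disjuncts are
false in `I`. -/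
def Timm {α : Type} (P : Program α) (I : Set (Lit α)) : Set (Lit α) :=
  {L | ∃ R ∈ P, L ∈ R.head ∧ bodyTrue I R ∧ ∀ L' ∈ R.head, L' ≠ L → L'.compl ∈ I}

/-- `X` is an unfounded set of literals with respect to `I`: for every `L ∈ X`
and every rule with `L` in its head, either the body is false or defeated
(some body literal has its complement in `I` or lies in `X`, or some weakly
negated literal is in `I`), or the head is already satisfied by `I`
independently of `X`. -/
def UnfoundedSet {α : Type} (P : Program α) (I X : Set (Lit α)) : Prop :=
  ∀ L ∈ X, ∀ R ∈ P, L ∈ R.head →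
    (∃ B ∈ R.body, B.compl ∈ I ∨ B ∈ X) ∨
    (∃ B ∈ R.nbody, B ∈ I) ∨
    (∃ L' ∈ R.head, L' ≠ L ∧ L' ∈ I ∧ L' ∉ X)

/-- The greatest unfounded set of `P` with respect to `I`. -/
def GUS {α : Type} (P : Program α) (I : Set (Lit α)) : Set (Lit α) :=
  ⋃₀ {X | UnfoundedSet P I X}

/-- The well-founded operator `𝒲_Π(I) := T_Π(I) ∪ ¬.GUS_Π(I)`. -/
def WOp {α : Type} (P : Program α) (I : Set (Lit α)) : Set (Lit α) :=
  Timm P I ∪ Lit.compl '' GUS P I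

/-- The well-founded interpretation `W_Π`, the least fixpoint `𝒲_Π^ω(∅)`. -/
def WFInterp {α : Type} (P : Program α) : Set (Lit α) :=
  ⋃ n : ℕ, (WOp P)^[n] ∅

/-! ## Relational databases and binary integrity constraints -/

/-- A ground database atom `p(ā)` over predicates `Pred` and domain `D`. -/
abbrev DBAtom (Pred D : Type) := Pred × List D

/-- A database instance over the schema `(Pred, ar)` and domain `D`:
a finite set of ground atoms respecting the arities. -/
structure Instance (Pred D : Type) (ar : Pred → ℕ) where
  atoms : Set (DBAtom Pred D)
  finite : atoms.Finite
  wf : ∀ a ∈ atoms, a.2.length = ar a.1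

/-- A binary integrity constraint in standard format
`∀ (⋁_i p_i(x̄_i) ∨ ⋁_i ¬q_i(ȳ_i) ∨ φ)` with `1 ≤ n + m ≤ 2`,
where `φ` is a formula of built-in predicates with fixed extensions
(represented semantically as a predicate on variable assignments). -/
structure BIC (Pred D : Type) (ar : Pred → ℕ) where
  nvars : ℕ
  pos : List (Pred × List (Fin nvars))
  neg : List (Pred × List (Fin nvars))
  builtin : (Fin nvars → D) → Prop
  wfpos : ∀ a ∈ pos, a.2.length = ar a.1
  wfneg : ∀ a ∈ neg, a.2.length = ar a.1
  lb : 1 ≤ pos.length + neg.length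
  ub : pos.length + neg.length ≤ 2

variable {Pred D : Type} {ar : Pred → ℕ}

/-- The ground clause of constraint `c` under the assignment `ν` holds in the
set of atoms `A`. -/
def BIC.holdsAt (c : BIC Pred D ar) (A : Set (DBAtom Pred D)) (ν : Fin c.nvars → D) : Prop :=
  (∃ a ∈ c.pos, (a.1, a.2.map ν) ∈ A) ∨ (∃ a ∈ c.neg, (a.1, a.2.map ν) ∉ A) ∨ c.builtin ν

/-- The set of atoms `A` (as a Herbrand structure over `D`) satisfies all
constraints in `IC`. -/
def SatSet (A : Set (DBAtom Pred D)) (IC : Set (BIC Pred D ar)) : Prop :=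
  ∀ c ∈ IC, ∀ ν : Fin c.nvars → D, c.holdsAt A ν

/-- The instance `r` satisfies the set of integrity constraints `IC`. -/
def SatIC (r : Instance Pred D ar) (IC : Set (BIC Pred D ar)) : Prop :=
  SatSet r.atoms IC

/-- `r'` is a repair of `r` w.r.t. `IC`: `r' ⊨ IC` and the symmetric difference
`Δ(r,r')` is minimal under set inclusion in `{Δ(r,r*) | r* ⊨ IC}`. -/
def IsRepair (r r' : Instance Pred D ar) (IC : Set (BIC Pred D ar)) : Prop :=
  SatIC r' IC ∧
    ∀ r'' : Instance Pred D ar, SatIC r'' IC →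
      symmDiff r.atoms r''.atoms ⊆ symmDiff r.atoms r'.atoms →
      symmDiff r.atoms r''.atoms = symmDiff r.atoms r'.atoms

/-- `r'` is a Dalal repair of `r` w.r.t. `IC`: `r' ⊨ IC` and the cardinality
`|Δ(r,r')|` is minimal in `{|Δ(r,r*)| : r* ⊨ IC}`. -/
def IsDalalRepair (r r' : Instance Pred D ar) (IC : Set (BIC Pred D ar)) : Prop :=
  SatIC r' IC ∧
    ∀ r'' : Instance Pred D ar, SatIC r'' IC →
      (symmDiff r.atoms r'.atoms).ncard ≤ (symmDiff r.atoms r''.atoms).ncard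

/-! ## The change program and the repair program -/

/-- Atoms of the repair programs: database atoms `p(ā)`, primed atoms `p′(ā)`,
and domain atoms `dom(a)` (playing the role of `act_r(a)` when grounding over
the active domain). -/
inductive GAtom (Pred D : Type) : Type
  | base : Pred → List D → GAtom Pred D
  | primed : Pred → List D → GAtom Pred D
  | dom : D → GAtom Pred D

/-- Variables occurring in a list of atoms with variable tuples. -/
def varsIn {n : ℕ} (l : List (Pred × List (Fin n))) : Set (Fin n) :=
  {v | ∃ a ∈ l, v ∈ a.2}

/-- The domain atoms `dom(ν v)` for the variables `v ∈ V`. -/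
def domBody {n : ℕ} (ν : Fin n → D) (V : Set (Fin n)) : Set (Lit (GAtom Pred D)) :=
  {L | ∃ v ∈ V, L = Lit.pos (GAtom.dom (ν v))}

/-- The positive primed head disjuncts `p′_i(ν x̄_i)` of constraint `c`. -/
def posHead (c : BIC Pred D ar) (ν : Fin c.nvars → D) : Set (Lit (GAtom Pred D)) :=
  {L | ∃ a ∈ c.pos, L = Lit.pos (GAtom.primed a.1 (a.2.map ν))}

/-- The negative primed head disjuncts `¬q′_i(ν ȳ_i)` of constraint `c`. -/
def negHead (c : BIC Pred D ar) (ν : Fin c.nvars → D) : Set (Lit (GAtom Pred D)) :=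
  {L | ∃ a ∈ c.neg, L = Lit.neg (GAtom.primed a.1 (a.2.map ν))}

/-- The triggering rule of constraint `c` at assignment `ν`:
`⋁ p′_i ∨ ⋁ ¬q′_i ← dom(x̄_1,…,x̄_n), not p_1,…,not p_n, q_1,…,q_m, not φ`
(the condition `not φ` on the built-in formula, which has a fixed extension,
is accounted for by including the ground rule only when `φ(ν)` is false). -/
def trigRule (c : BIC Pred D ar) (ν : Fin c.nvars → D) : Rule (GAtom Pred D) where
  head := posHead c ν ∪ negHead c ν
  body := domBody ν (varsIn c.pos) ∪
    {L | ∃ a ∈ c.neg, L = Lit.pos (GAtom.base a.1 (a.2.map ν))}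
  nbody := {L | ∃ a ∈ c.pos, L = Lit.pos (GAtom.base a.1 (a.2.map ν))}

/-- The stabilizing rule of `c` at `ν` for the `j`-th positive database literal:
remove `p′_j` from the disjunctive head and add its complement `¬p′_j` to the
body, together with the `dom` atoms and `not φ`. -/
def stabPosRule (c : BIC Pred D ar) (ν : Fin c.nvars → D) (j : Fin c.pos.length) :
    Rule (GAtom Pred D) where
  head := {L | ∃ i : Fin c.pos.length, i ≠ j ∧
      L = Lit.pos (GAtom.primed (c.pos.get i).1 ((c.pos.get i).2.map ν))} ∪ negHead c ν
  body := domBody ν (varsIn c.pos ∪ varsIn c.neg) ∪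
    {Lit.neg (GAtom.primed (c.pos.get j).1 ((c.pos.get j).2.map ν))}
  nbody := ∅

/-- The stabilizing rule of `c` at `ν` for the `j`-th negative database literal:
remove `¬q′_j` from the disjunctive head and add its complement `q′_j` to the
body, together with the `dom` atoms and `not φ`. -/
def stabNegRule (c : BIC Pred D ar) (ν : Fin c.nvars → D) (j : Fin c.neg.length) :
    Rule (GAtom Pred D) where
  head := posHead c ν ∪ {L | ∃ i : Fin c.neg.length, i ≠ j ∧
      L = Lit.neg (GAtom.primed (c.neg.get i).1 ((c.neg.get i).2.map ν))}
  body := domBody ν (varsIn c.pos ∪ varsIn c.neg) ∪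
    {Lit.pos (GAtom.primed (c.neg.get j).1 ((c.neg.get j).2.map ν))}
  nbody := ∅

/-- The change program `Π_Δ(r)` grounded over the subdomain `A ⊆ D`:
facts for `r` and for the (active) domain, triggering rules and stabilizing
rules for all constraints in `IC`. -/
def changeProgOn (r : Instance Pred D ar) (IC : Set (BIC Pred D ar)) (A : Set D) :
    Program (GAtom Pred D) :=
  {R | ∃ a ∈ r.atoms, R = fact (Lit.pos (GAtom.base a.1 a.2))} ∪
  {R | ∃ d ∈ A, R = fact (Lit.pos (GAtom.dom d))} ∪
  {R | ∃ c ∈ IC, ∃ ν : Fin c.nvars → D, (∀ i, ν i ∈ A) ∧ ¬ c.builtin ν ∧ R = trigRule c ν} ∪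
  {R | ∃ c ∈ IC, ∃ ν : Fin c.nvars → D, (∀ i, ν i ∈ A) ∧ ¬ c.builtin ν ∧
        ∃ j : Fin c.pos.length, R = stabPosRule c ν j} ∪
  {R | ∃ c ∈ IC, ∃ ν : Fin c.nvars → D, (∀ i, ν i ∈ A) ∧ ¬ c.builtin ν ∧
        ∃ j : Fin c.neg.length, R = stabNegRule c ν j}

/-- The change program `Π_Δ(r)` grounded over the full domain `D`. -/
def changeProg (r : Instance Pred D ar) (IC : Set (BIC Pred D ar)) :
    Program (GAtom Pred D) :=
  changeProgOn r IC Set.univ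

/-- The persistence rules `p′(x̄) ← p(x̄), not ¬p′(x̄)` and
`¬p′(x̄) ← dom(x̄), not p(x̄), not p′(x̄)`, grounded over `A ⊆ D`. -/
def persistProgOn (ar : Pred → ℕ) (A : Set D) : Program (GAtom Pred D) :=
  {R | ∃ (p : Pred) (t : List D), t.length = ar p ∧ (∀ d ∈ t, d ∈ A) ∧
    (R = Rule.mk {Lit.pos (GAtom.primed p t)} {Lit.pos (GAtom.base p t)}
          {Lit.neg (GAtom.primed p t)} ∨
     R = Rule.mk {Lit.neg (GAtom.primed p t)} {L | ∃ d ∈ t, L = Lit.pos (GAtom.dom d)}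
          {Lit.pos (GAtom.base p t), Lit.pos (GAtom.primed p t)})}

/-- The repair program `Π(r)` grounded over `A ⊆ D`: the change program plus
the persistence rules. -/
def repairProgOn (r : Instance Pred D ar) (IC : Set (BIC Pred D ar)) (A : Set D) :
    Program (GAtom Pred D) :=
  changeProgOn r IC A ∪ persistProgOn ar A

/-- The repair program `Π(r)` grounded over the full domain `D`. -/
def repairProg (r : Instance Pred D ar) (IC : Set (BIC Pred D ar)) :
    Program (GAtom Pred D) :=
  repairProgOn r IC Set.univ

/-- The database instance corresponding to a set of ground literals:
`I(S) = {p(ā) | p′(ā) ∈ S} ∪ {p(ā) | p(ā) ∈ S and ¬p′(ā) ∉ S}`. -/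
def IofS (S : Set (Lit (GAtom Pred D))) : Set (DBAtom Pred D) :=
  {a | Lit.pos (GAtom.primed a.1 a.2) ∈ S} ∪
  {a | Lit.pos (GAtom.base a.1 a.2) ∈ S ∧ Lit.neg (GAtom.primed a.1 a.2) ∉ S}

/-- The database instance `{p(ā) | p′(ā) ∈ S}` extracted from the primed
atoms of `S`. -/
def primedAtoms (S : Set (Lit (GAtom Pred D))) : Set (DBAtom Pred D) :=
  {a | Lit.pos (GAtom.primed a.1 a.2) ∈ S}

/-- `S(r,r′) = {p(ā) | p(ā) ∈ r} ∪ {p′(ā) | p(ā) ∈ r′} ∪ {¬p′(ā) | p(ā) ∉ r′}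
∪ {dom(a) | a ∈ D}`. -/
def SofRR (r r' : Instance Pred D ar) : Set (Lit (GAtom Pred D)) :=
  {L | ∃ a ∈ r.atoms, L = Lit.pos (GAtom.base a.1 a.2)} ∪
  {L | ∃ a ∈ r'.atoms, L = Lit.pos (GAtom.primed a.1 a.2)} ∪
  {L | ∃ a : DBAtom Pred D, a.2.length = ar a.1 ∧ a ∉ r'.atoms ∧
        L = Lit.neg (GAtom.primed a.1 a.2)} ∪
  {L | ∃ d : D, L = Lit.pos (GAtom.dom d)}

/-! ## Active domain and domain independence -/

/-- The active domain of `r`: the constants occurring in `r`. -/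
def ActDom (r : Instance Pred D ar) : Set D :=
  {d | ∃ a ∈ r.atoms, d ∈ a.2}

/-- Satisfaction of `IC` in `A` relativized to the subdomain `Dm`. -/
def SatSetOn (A : Set (DBAtom Pred D)) (IC : Set (BIC Pred D ar)) (Dm : Set D) : Prop :=
  ∀ c ∈ IC, ∀ ν : Fin c.nvars → D, (∀ i, ν i ∈ Dm) → c.holdsAt A ν

/-- `IC` is domain independent: for every instance, satisfaction of the
constraints depends only on the active domain. -/
def DomIndep (IC : Set (BIC Pred D ar)) : Prop :=
  ∀ (r : Instance Pred D ar) (A : Set D), ActDom r ⊆ A →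
    (SatSetOn r.atoms IC A ↔ SatSet r.atoms IC)

/-! ## Weak constraints and Dalal answer sets -/

/-- The violated ground instances of the weak constraints
`⇐ p′(x̄), not p(x̄)` and `⇐ ¬p′(x̄), p(x̄)` in `S` (a ground weak constraint
is violated by `S` iff all its body conditions hold in `S`). -/
def weakViol (ar : Pred → ℕ) (S : Set (Lit (GAtom Pred D))) :
    Set (Bool × DBAtom Pred D) :=
  {x | x.2.2.length = ar x.2.1 ∧
    ((x.1 = true ∧ Lit.pos (GAtom.primed x.2.1 x.2.2) ∈ S ∧
        Lit.pos (GAtom.base x.2.1 x.2.2) ∉ S) ∨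
     (x.1 = false ∧ Lit.neg (GAtom.primed x.2.1 x.2.2) ∈ S ∧
        Lit.pos (GAtom.base x.2.1 x.2.2) ∈ S))}

/-- Answer sets of the program `Π^D(r)` (the change program plus the weak
constraints): answer sets of `Π_Δ(r)` minimizing the number of violated
ground weak constraints. -/
def DalalAnswerSet (r : Instance Pred D ar) (IC : Set (BIC Pred D ar))
    (S : Set (Lit (GAtom Pred D))) : Prop :=
  AnswerSet S (changeProg r IC) ∧
    ∀ S' : Set (Lit (GAtom Pred D)), AnswerSet S' (changeProg r IC) →
      (weakViol ar S).ncard ≤ (weakViol ar S').ncard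

/-! ## Functional dependencies and unary constraints -/

/-- A unary integrity constraint: a BIC with at most one database literal. -/
def BIC.IsUnary (c : BIC Pred D ar) : Prop := c.pos.length + c.neg.length ≤ 1

/-- A functional dependency: a BIC of the form
`∀ (¬p(x̄,ȳ) ∨ ¬p(x̄,z̄) ∨ ȳ = z̄)` with pairwise distinct variables. -/
def BIC.IsFD (c : BIC Pred D ar) : Prop :=
  c.pos = [] ∧ ∃ (p : Pred) (xs ys zs : List (Fin c.nvars)),
    ys.length = zs.length ∧ (xs ++ ys ++ zs).Nodup ∧
    c.neg = [(p, xs ++ ys), (p, xs ++ zs)] ∧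
    ∀ ν : Fin c.nvars → D, (c.builtin ν ↔ ys.map ν = zs.map ν)

/-- Lemma `l3`. Let `r`, `r'` be database instances over the
same schema and finite domain `D`, and `IC` a set of binary integrity
constraints. Assume `r' ⊨ IC` and the symmetric difference `Δ(r,r')` is a
minimal element under set inclusion of `{Δ(r,r*) | r* ⊨ IC}`. Then for every
answer set `S` of the change program `Π_Δ(r)` with `S ⊆ S(r,r')`, it holds
that `r' = I(S)`. -/
theorem statement4 {Pred D : Type} [Finite Pred] [Finite D] {ar : Pred → ℕ}
    (r r' : Instance Pred D ar) (IC : Set (BIC Pred D ar))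
    (hsat : SatIC r' IC)
    (hmin : ∀ r'' : Instance Pred D ar, SatIC r'' IC →
      symmDiff r.atoms r''.atoms ⊆ symmDiff r.atoms r'.atoms →
      symmDiff r.atoms r''.atoms = symmDiff r.atoms r'.atoms)
    (S : Set (Lit (GAtom Pred D))) (hS : AnswerSet S (changeProg r IC))
    (hsub : S ⊆ SofRR r r') :
    r'.atoms = IofS S := by
  classical
  obtain ⟨hcoh, hsatred, _⟩ := hS
  -- firing of rules of the change program through the reduct
  have hfire : ∀ R ∈ changeProg r IC, (∀ L ∈ R.nbody, L ∉ S) → R.body ⊆ S →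
      ∃ L ∈ R.head, L ∈ S := by
    intro R hR hn hb
    have hmem : Rule.mk R.head R.body ∅ ∈ reduct (changeProg r IC) S := ⟨R, hR, hn, rfl⟩
    exact hsatred (Rule.mk R.head R.body ∅) hmem hb (fun L hL => absurd hL (Set.notMem_empty L))
  -- dom atoms are in S
  have hdom : ∀ d : D, Lit.pos (GAtom.dom d) ∈ S := by
    intro d
    have hR : fact (Lit.pos (GAtom.dom d)) ∈ changeProg r IC := by
      left; left; left; right; exact ⟨d, trivial, rfl⟩
    have := hfire _ hR (by simp [fact]) (by simp [fact])
    simpa [fact] using this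
  -- base atoms in S are exactly the atoms of r
  have hbase : ∀ p t, Lit.pos (GAtom.base p t) ∈ S ↔ (p, t) ∈ r.atoms := by
    intro p t
    constructor
    · intro h
      rcases hsub h with (((⟨a, ha, he⟩ | ⟨a, _, he⟩) | ⟨a, _, _, he⟩) | ⟨d, he⟩)
      · simp only [Lit.pos.injEq, GAtom.base.injEq] at he
        obtain ⟨rfl, rfl⟩ := he; simpa using ha
      · simp at he
      · simp at he
      · simp at he
    · intro h
      have hR : fact (Lit.pos (GAtom.base p t)) ∈ changeProg r IC := by
        left; left; left; left; exact ⟨(p, t), h, rfl⟩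
      have := hfire _ hR (by simp [fact]) (by simp [fact])
      simpa [fact] using this
  -- primed literals in S reflect membership in r'
  have hprpos : ∀ p t, Lit.pos (GAtom.primed p t) ∈ S → (p, t) ∈ r'.atoms := by
    intro p t h
    rcases hsub h with (((⟨a, _, he⟩ | ⟨a, ha, he⟩) | ⟨a, _, _, he⟩) | ⟨d, he⟩)
    · simp at he
    · simp only [Lit.pos.injEq, GAtom.primed.injEq] at he
      obtain ⟨rfl, rfl⟩ := he; simpa using ha
    · simp at he
    · simp at he
  have hprneg : ∀ p t, Lit.neg (GAtom.primed p t) ∈ S → (p, t) ∉ r'.atoms := by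
    intro p t h
    rcases hsub h with (((⟨a, _, he⟩ | ⟨a, _, he⟩) | ⟨a, _, ha, he⟩) | ⟨d, he⟩)
    · simp at he
    · simp at he
    · simp only [Lit.neg.injEq, GAtom.primed.injEq] at he
      obtain ⟨rfl, rfl⟩ := he; simpa using ha
    · simp at he
  have hImem : ∀ p t, (p, t) ∈ IofS S ↔
      (Lit.pos (GAtom.primed p t) ∈ S ∨
        (Lit.pos (GAtom.base p t) ∈ S ∧ Lit.neg (GAtom.primed p t) ∉ S)) := by
    intro p t; simp [IofS, Set.mem_union, Set.mem_setOf_eq]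
  -- I(S) satisfies the integrity constraints
  have hICS : SatSet (IofS S) IC := by
    intro c hc ν
    by_contra hviol
    simp only [BIC.holdsAt] at hviol
    push_neg at hviol
    obtain ⟨h1, h2, h3⟩ := hviol
    by_cases hA : ∃ a ∈ c.pos, Lit.neg (GAtom.primed a.1 (a.2.map ν)) ∈ S
    · -- use a stabilizing rule for a positive literal
      obtain ⟨a, haa, hneg⟩ := hA
      obtain ⟨j, hj⟩ := List.mem_iff_get.mp haa
      have hR : stabPosRule c ν j ∈ changeProg r IC := by
        left; right; exact ⟨c, hc, ν, fun _ => trivial, h3, j, rfl⟩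
      have hfired := hfire _ hR (by simp [stabPosRule])
        (by
          intro L hL
          rcases hL with ⟨v, _, rfl⟩ | hL
          · exact hdom _
          · rw [Set.mem_singleton_iff] at hL; rw [hL, hj]; exact hneg)
      rcases hfired with ⟨L, ⟨i, _, rfl⟩ | ⟨b, hbmem, rfl⟩, hLS⟩
      · have := h1 (c.pos.get i) (List.get_mem c.pos i)
        rw [hImem] at this; exact this (Or.inl hLS)
      · have := h2 b hbmem
        rw [hImem] at this
        rcases this with hpos | ⟨_, hnn⟩
        · exact hcoh _ ⟨hpos, hLS⟩
        · exact hnn hLS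
    · by_cases hB : ∃ b ∈ c.neg, Lit.pos (GAtom.primed b.1 (b.2.map ν)) ∈ S
      · -- use a stabilizing rule for a negative literal
        obtain ⟨b, hbb, hposb⟩ := hB
        obtain ⟨j, hj⟩ := List.mem_iff_get.mp hbb
        have hR : stabNegRule c ν j ∈ changeProg r IC := by
          right; exact ⟨c, hc, ν, fun _ => trivial, h3, j, rfl⟩
        have hfired := hfire _ hR (by simp [stabNegRule])
          (by
            intro L hL
            rcases hL with ⟨v, _, rfl⟩ | hL
            · exact hdom _
            · rw [Set.mem_singleton_iff] at hL; rw [hL, hj]; exact hposb)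
        rcases hfired with ⟨L, ⟨a, hamem, rfl⟩ | ⟨i, _, rfl⟩, hLS⟩
        · have := h1 a hamem
          rw [hImem] at this; exact this (Or.inl hLS)
        · have := h2 (c.neg.get i) (List.get_mem c.neg i)
          rw [hImem] at this
          rcases this with hpos | ⟨_, hnn⟩
          · exact hcoh _ ⟨hpos, hLS⟩
          · exact hnn hLS
      · -- use the triggering rule
        push_neg at hA hB
        have hR : trigRule c ν ∈ changeProg r IC := by
          left; left; right; exact ⟨c, hc, ν, fun _ => trivial, h3, rfl⟩
        have hfired := hfire _ hR
          (by
            intro L hL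
            obtain ⟨a, hamem, rfl⟩ := hL
            intro hbS
            have := h1 a hamem
            rw [hImem] at this
            exact this (Or.inr ⟨hbS, hA a hamem⟩))
          (by
            intro L hL
            rcases hL with ⟨v, _, rfl⟩ | ⟨b, hbmem, rfl⟩
            · exact hdom _
            · have := h2 b hbmem
              rw [hImem] at this
              rcases this with hpos | ⟨hb, _⟩
              · exact absurd hpos (hB b hbmem)
              · exact hb)
        rcases hfired with ⟨L, ⟨a, hamem, rfl⟩ | ⟨b, hbmem, rfl⟩, hLS⟩
        · have := h1 a hamem
          rw [hImem] at this; exact this (Or.inl hLS)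
        · have := h2 b hbmem
          rw [hImem] at this
          rcases this with hpos | ⟨_, hnn⟩
          · exact hcoh _ ⟨hpos, hLS⟩
          · exact hnn hLS
  -- I(S) as an instance
  have hsubI : IofS S ⊆ r.atoms ∪ r'.atoms := by
    intro a ha
    rw [show a = (a.1, a.2) from rfl, hImem] at ha
    rcases ha with h | ⟨h, _⟩
    · exact Or.inr (hprpos _ _ h)
    · exact Or.inl (by simpa using (hbase _ _).mp h)
  have hwf : ∀ a ∈ IofS S, a.2.length = ar a.1 := by
    intro a ha
    rcases hsubI ha with h | h
    · exact r.wf a h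
    · exact r'.wf a h
  let r'' : Instance Pred D ar := ⟨IofS S, (r.finite.union r'.finite).subset hsubI, hwf⟩
  -- Δ(r, I(S)) ⊆ Δ(r, r')
  have hdsub : symmDiff r.atoms (IofS S) ⊆ symmDiff r.atoms r'.atoms := by
    intro a ha
    rw [Set.mem_symmDiff] at ha ⊢
    rcases ha with ⟨har, hnI⟩ | ⟨hI, hnr⟩
    · left; refine ⟨har, ?_⟩
      rw [show a = (a.1, a.2) from rfl, hImem] at hnI
      push_neg at hnI
      obtain ⟨_, hnI2⟩ := hnI
      have hbS : Lit.pos (GAtom.base a.1 a.2) ∈ S := (hbase _ _).mpr (by simpa using har)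
      have hneg := hnI2 hbS
      exact fun h => hprneg _ _ hneg (by simpa using h)
    · right
      rw [show a = (a.1, a.2) from rfl, hImem] at hI
      rcases hI with h | ⟨h, _⟩
      · exact ⟨by simpa using hprpos _ _ h, hnr⟩
      · exact absurd (by simpa using (hbase _ _).mp h) hnr
  have heq := hmin r'' hICS hdsub
  have : IofS S = r'.atoms := symmDiff_right_injective r.atoms heq
  exact this.symm

end CQA
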